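/- Let a ∈ (0,1) and let x ∈ ℝ^K have all coordinates positive (with the convention x_0 = a). Then the pairwise balance condition — k'_i x_{k−e_i} x_{k'} = k_i x_k x_{k'−e_i} for every pair of edges (k,i), (k',i) ∈ M — holds if and only if x has a product-form representation, i.e. there exists ν ∈ ℝ^I such that x_k = (a/c_k)·exp(b·Σ_{i∈I} k_i ν_i) for all k ∈ K. -/

import Mathlib

open Finset

/-- `c_k = ∏_i (k_i)!`. -/
noncomputable def confC {I : Type*} [Fintype I] (k : I → ℕ) : ℝ :=
  ∏ i, (Nat.factorial (k i) : ℝ)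

/-- The coordinates of `x` extended by the convention `x_0 = a`. -/
def xeDef {I : Type*} [Fintype I]
    (a : ℝ) (x : (I → ℕ) → ℝ) (m : I → ℕ) : ℝ :=
  if m = 0 then a else x m

/-- The set of configurations `k` such that `(k, i)` is an edge. -/
def edgesF {I : Type*} [Fintype I] [DecidableEq I]
    (Kbar : Finset (I → ℕ)) (i : I) : Finset (I → ℕ) :=
  (Kbar.erase 0).filter (fun k => 1 ≤ k i ∧ k - Pi.single i 1 ∈ Kbar)

section Aux

variable {I : Type*} [Fintype I] [DecidableEq I]

lemma confC_zero : confC (0 : I → ℕ) = 1 := by simp [confC]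

lemma confC_pos (k : I → ℕ) : 0 < confC k := by
  apply Finset.prod_pos; intro i _; exact_mod_cast (k i).factorial_pos

lemma confC_succ (k : I → ℕ) (i : I) (hk : 1 ≤ k i) :
    confC k = (k i : ℝ) * confC (k - Pi.single i 1) := by
  rw [confC, confC, ← Finset.mul_prod_erase _ _ (mem_univ i),
      ← Finset.mul_prod_erase _ _ (mem_univ i), ← mul_assoc]
  congr 1
  · have h1 : (k - Pi.single i 1 : I → ℕ) i = k i - 1 := by simp [Pi.sub_apply]
    rw [h1, ← Nat.cast_mul, Nat.mul_factorial_pred (Nat.one_le_iff_ne_zero.mp hk)]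
  · apply Finset.prod_congr rfl
    intro j hj
    have h2 : (k - Pi.single i 1 : I → ℕ) j = k j := by
      simp [Pi.sub_apply, Pi.single_apply, (mem_erase.mp hj).1]
    rw [h2]

lemma sum_sub_single (k : I → ℕ) (i : I) (hk : 1 ≤ k i) (ν : I → ℝ) :
    ∑ j, ((k - Pi.single i 1 : I → ℕ) j : ℝ) * ν j = (∑ j, (k j : ℝ) * ν j) - ν i := by
  have h1 : ∀ j, (((k - Pi.single i 1 : I → ℕ)) j : ℝ) = (k j : ℝ) - ((Pi.single i 1 : I → ℕ) j : ℝ) := by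
    intro j
    have hle : (Pi.single i 1 : I → ℕ) j ≤ k j := by
      rcases eq_or_ne j i with rfl | h
      · simpa using hk
      · simp [Pi.single_apply, h]
    rw [Pi.sub_apply, Nat.cast_sub hle]
  simp only [h1, sub_mul, Finset.sum_sub_distrib]
  congr 1
  simp [Pi.single_apply, ite_mul, Finset.sum_ite_eq']

lemma sum_nat_sub_single (k : I → ℕ) (i : I) (hk : 1 ≤ k i) :
    ∑ j, (k - Pi.single i 1 : I → ℕ) j = (∑ j, k j) - 1 := by
  have h1 : ∀ j, (k - Pi.single i 1 : I → ℕ) j = k j - (Pi.single i 1 : I → ℕ) j := fun j => rfl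
  have h2 : (∑ j, Pi.single i (1 : ℕ) j) = 1 := by
    simp [Pi.single_apply, Finset.sum_ite_eq']
  have h3 : (∑ j, (k - Pi.single i 1 : I → ℕ) j) + ∑ j, Pi.single i (1 : ℕ) j = ∑ j, k j := by
    rw [← Finset.sum_add_distrib]
    apply Finset.sum_congr rfl
    intro j _
    rw [h1]
    have hle : (Pi.single i 1 : I → ℕ) j ≤ k j := by
      rcases eq_or_ne j i with rfl | h
      · simpa using hk
      · simp [Pi.single_apply, h]
    omega
  omega

lemma single_ne_zero' (i : I) : (Pi.single i 1 : I → ℕ) ≠ 0 := by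
  intro h
  simpa using congrFun h i

end Aux

/-- the pairwise balance condition holds for every pair of edges
iff `x` has a product-form representation `x_k = (a/c_k)·exp(b ∑_i k_i ν_i)` on `K`,
where `b = −log a`. -/
theorem balance_iff_product_form
    {I : Type*} [Fintype I] [DecidableEq I] [Nonempty I]
    (Kbar : Finset (I → ℕ))
    (h0 : (0 : I → ℕ) ∈ Kbar)
    (hunit : ∀ i : I, Pi.single i 1 ∈ Kbar)
    (hmono : ∀ k ∈ Kbar, ∀ k' : I → ℕ, (∀ i, k' i ≤ k i) → k' ∈ Kbar)
    (a : ℝ) (ha : a ∈ Set.Ioo (0 : ℝ) 1)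
    (b : ℝ) (hb : b = -Real.log a)
    (x : (I → ℕ) → ℝ) (hx : ∀ k ∈ Kbar.erase 0, 0 < x k) :
    (∀ i : I, ∀ k ∈ edgesF Kbar i, ∀ k' ∈ edgesF Kbar i,
        (k' i : ℝ) * xeDef a x (k - Pi.single i 1) * xeDef a x k' =
          (k i : ℝ) * xeDef a x k * xeDef a x (k' - Pi.single i 1)) ↔
      ∃ ν : I → ℝ, ∀ k ∈ Kbar.erase 0,
        x k = (a / confC k) * Real.exp (b * ∑ i, (k i : ℝ) * ν i) := by
  obtain ⟨ha0, ha1⟩ := ha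
  have hb0 : 0 < b := by
    rw [hb]
    have := Real.log_neg ha0 ha1
    linarith
  constructor
  · intro hbal
    set ν : I → ℝ := fun i => (Real.log (x (Pi.single i 1)) - Real.log a) / b with hν
    have hei_mem : ∀ i, Pi.single i 1 ∈ Kbar.erase 0 := fun i =>
      mem_erase.mpr ⟨single_ne_zero' i, hunit i⟩
    have hxei : ∀ i, x (Pi.single i 1) = a * Real.exp (b * ν i) := by
      intro i
      have hxp := hx _ (hei_mem i)
      rw [hν]
      field_simp
      rw [Real.exp_sub, Real.exp_log hxp, Real.exp_log ha0]
      field_simp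
    have key : ∀ n : ℕ, ∀ k ∈ Kbar, (∑ j, k j) = n →
        xeDef a x k = (a / confC k) * Real.exp (b * ∑ j, (k j : ℝ) * ν j) := by
      intro n
      induction n using Nat.strong_induction_on with
      | _ n ih =>
        intro k hkK hsum
        rcases eq_or_ne k 0 with rfl | hk0
        · simp [xeDef, confC_zero]
        · obtain ⟨i, hi⟩ : ∃ i, 1 ≤ k i := by
            by_contra h
            push_neg at h
            exact hk0 (funext fun j => Nat.lt_one_iff.mp (h j))
          have hke : k - Pi.single i 1 ∈ Kbar :=
            hmono k hkK _ (fun j => Nat.sub_le _ _)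
          have hkedge : k ∈ edgesF Kbar i := by
            simp only [edgesF, mem_filter, mem_erase]
            exact ⟨⟨hk0, hkK⟩, hi, hke⟩
          have heedge : Pi.single i 1 ∈ edgesF Kbar i := by
            simp only [edgesF, mem_filter, mem_erase]
            refine ⟨⟨single_ne_zero' i, hunit i⟩, by simp, ?_⟩
            simpa using h0
          have hE := hbal i k hkedge (Pi.single i 1) heedge
          have hs1 : (Pi.single i 1 : I → ℕ) i = 1 := by simp
          have hs2 : (Pi.single i 1 : I → ℕ) - Pi.single i 1 = 0 := by
            funext j; simp [Pi.sub_apply]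
          rw [hs1, hs2] at hE
          simp only [Nat.cast_one, one_mul] at hE
          have hxe0 : xeDef a x (0 : I → ℕ) = a := by simp [xeDef]
          have hxek : xeDef a x k = x k := by simp [xeDef, hk0]
          have hxee : xeDef a x (Pi.single i 1) = x (Pi.single i 1) := by
            simp [xeDef, single_ne_zero' i]
          rw [hxe0, hxek, hxee] at hE
          -- induction hypothesis on k - e_i
          have hn1 : 1 ≤ n := by
            rw [← hsum]
            calc 1 ≤ k i := hi
            _ ≤ ∑ j, k j := Finset.single_le_sum (fun j _ => Nat.zero_le _) (mem_univ i)
          have hsum' : ∑ j, (k - Pi.single i 1 : I → ℕ) j = n - 1 := by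
            rw [sum_nat_sub_single k i hi, hsum]
          have hIH := ih (n - 1) (by omega) (k - Pi.single i 1) hke hsum'
          rw [sum_sub_single k i hi ν] at hIH
          -- now solve for x k
          have hki : (0 : ℝ) < (k i : ℝ) := by exact_mod_cast hi
          rw [hxek]
          have hxk : x k = xeDef a x ((k - Pi.single i 1 : I → ℕ)) * x (Pi.single i 1) / ((k i : ℝ) * a) := by
            field_simp
            linarith [hE]
          rw [hxk, hIH, hxei i, confC_succ k i hi]
          have hexp : Real.exp (b * ((∑ j, (k j : ℝ) * ν j) - ν i)) =
              Real.exp (b * ∑ j, (k j : ℝ) * ν j) / Real.exp (b * ν i) := by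
            rw [mul_sub, Real.exp_sub]
          rw [hexp]
          have hc := confC_pos (k - Pi.single i 1)
          field_simp
    refine ⟨ν, fun k hk => ?_⟩
    obtain ⟨hk0, hkK⟩ := mem_erase.mp hk
    have := key (∑ j, k j) k hkK rfl
    rwa [show xeDef a x k = x k from by simp [xeDef, hk0]] at this
  · rintro ⟨ν, hν⟩ i k hk k' hk'
    simp only [edgesF, mem_filter, mem_erase] at hk hk'
    obtain ⟨⟨hk0, hkK⟩, hki, hke⟩ := hk
    obtain ⟨⟨hk'0, hk'K⟩, hk'i, hk'e⟩ := hk'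
    have hxe : ∀ m ∈ Kbar, xeDef a x m =
        (a / confC m) * Real.exp (b * ∑ j, (m j : ℝ) * ν j) := by
      intro m hm
      rcases eq_or_ne m 0 with rfl | hm0
      · simp [xeDef, confC_zero]
      · rw [show xeDef a x m = x m from by simp [xeDef, hm0]]
        exact hν m (mem_erase.mpr ⟨hm0, hm⟩)
    rw [hxe _ hke, hxe _ hkK, hxe _ hk'K, hxe _ hk'e,
        sum_sub_single k i hki ν, sum_sub_single k' i hk'i ν,
        confC_succ k i hki, confC_succ k' i hk'i]
    have hexp : ∀ S : ℝ, Real.exp (b * (S - ν i)) =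
        Real.exp (b * S) / Real.exp (b * ν i) := by
      intro S; rw [mul_sub, Real.exp_sub]
    rw [hexp, hexp]
    have hc1 := confC_pos (k - Pi.single i 1)
    have hc2 := confC_pos (k' - Pi.single i 1)
    have hki' : (0 : ℝ) < (k i : ℝ) := by exact_mod_cast hki
    have hk'i' : (0 : ℝ) < (k' i : ℝ) := by exact_mod_cast hk'i
    field_simp
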